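/- Let f be the N(0,σ²) density and h a probability density on ℝ symmetric about 0 (h(y) = h(-y)). Define f_{H1}(φ) = ∫ f(φ - y) h(y) dy. Then the ratio k(φ) = f_{H1}(φ)/f(φ) is an even function of φ that is nondecreasing in |φ|. -/

import Mathlib

open MeasureTheory

/-- A Gaussian location mixture with symmetric mixing density has a likelihood ratio with
respect to the null Gaussian density that is even in `φ` and nondecreasing in `|φ|`. -/
theorem stmt5 (σ : ℝ) (hσ : 0 < σ) (f h : ℝ → ℝ)
    (hf : ∀ x, f x = Real.exp (-x^2 / (2*σ^2)) / Real.sqrt (2 * Real.pi * σ^2))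
    (hh_nonneg : ∀ y, 0 ≤ h y) (hh_symm : ∀ y, h (-y) = h y)
    (hh_meas : Measurable h) (hh_int : Integrable h) (hh_prob : ∫ y, h y = 1)
    (hint : ∀ φ : ℝ, Integrable fun y => f (φ - y) * h y)
    (k : ℝ → ℝ) (hk : ∀ φ, k φ = (∫ y, f (φ - y) * h y) / f φ) :
    (∀ φ, k (-φ) = k φ) ∧ (∀ a b : ℝ, |a| ≤ |b| → k a ≤ k b) := by
  have hc : (0:ℝ) < 2*σ^2 := by positivity
  have hS : (0:ℝ) < Real.sqrt (2 * Real.pi * σ^2) :=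
    Real.sqrt_pos.mpr (by positivity)
  -- pointwise identity for the integrand of the likelihood ratio
  have hpt : ∀ φ y : ℝ, f (φ - y) * h y / f φ
      = Real.exp ((2*φ*y - y^2)/(2*σ^2)) * h y := by
    intro φ y
    rw [hf, hf]
    have hexp : Real.exp (-(φ-y)^2/(2*σ^2))
        = Real.exp ((2*φ*y - y^2)/(2*σ^2)) * Real.exp (-φ^2/(2*σ^2)) := by
      rw [← Real.exp_add]; congr 1; field_simp; ring
    rw [hexp]
    have h1 : Real.exp (-φ^2/(2*σ^2)) ≠ 0 := Real.exp_ne_zero _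
    field_simp
  -- integrability of the exponential integrand
  have hkint : ∀ φ, Integrable (fun y => Real.exp ((2*φ*y - y^2)/(2*σ^2)) * h y) := by
    intro φ
    exact ((hint φ).div_const (f φ)).congr (Filter.Eventually.of_forall fun y => hpt φ y)
  -- formula for k
  have hkeq : ∀ φ, k φ = ∫ y, Real.exp ((2*φ*y - y^2)/(2*σ^2)) * h y := by
    intro φ
    rw [hk, ← integral_div]
    exact integral_congr_ae (Filter.Eventually.of_forall fun y => hpt φ y)
  -- evenness
  have heven : ∀ φ, k (-φ) = k φ := by
    intro φ
    rw [hkeq, hkeq]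
    have : ∀ y : ℝ, Real.exp ((2*(-φ)*y - y^2)/(2*σ^2)) * h y
        = (fun z => Real.exp ((2*φ*z - z^2)/(2*σ^2)) * h z) (-y) := by
      intro y
      simp only [hh_symm]
      ring_nf
    rw [integral_congr_ae (Filter.Eventually.of_forall this)]
    exact MeasureTheory.integral_neg_eq_self
      (fun z => Real.exp ((2*φ*z - z^2)/(2*σ^2)) * h z) (volume : Measure ℝ)
  refine ⟨heven, ?_⟩
  -- symmetrized (cosh) representation
  have hMpt : ∀ φ y : ℝ,
      (Real.exp ((2*φ*y - y^2)/(2*σ^2)) * h y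
        + Real.exp ((2*(-φ)*y - y^2)/(2*σ^2)) * h y) / 2
      = Real.exp (-y^2/(2*σ^2)) * Real.cosh (2*φ*y/(2*σ^2)) * h y := by
    intro φ y
    rw [Real.cosh_eq]
    have e1 : (2*φ*y - y^2)/(2*σ^2) = 2*φ*y/(2*σ^2) + (-y^2/(2*σ^2)) := by
      field_simp; ring
    have e2 : (2*(-φ)*y - y^2)/(2*σ^2) = -(2*φ*y/(2*σ^2)) + (-y^2/(2*σ^2)) := by
      field_simp; ring
    rw [e1, e2, Real.exp_add, Real.exp_add]
    ring
  have hMint : ∀ φ, Integrable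
      (fun y => Real.exp (-y^2/(2*σ^2)) * Real.cosh (2*φ*y/(2*σ^2)) * h y) := by
    intro φ
    exact (((hkint φ).add (hkint (-φ))).div_const 2).congr
      (Filter.Eventually.of_forall fun y => hMpt φ y)
  have hkM : ∀ φ, k φ = ∫ y, Real.exp (-y^2/(2*σ^2)) * Real.cosh (2*φ*y/(2*σ^2)) * h y := by
    intro φ
    have : k φ = (k φ + k (-φ)) / 2 := by rw [heven]; ring
    rw [this, hkeq φ, hkeq (-φ),
      ← integral_add (hkint φ) (hkint (-φ)), ← integral_div]
    exact integral_congr_ae (Filter.Eventually.of_forall fun y => hMpt φ y)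
  intro a b hab
  rw [hkM a, hkM b]
  refine integral_mono (hMint a) (hMint b) fun y => ?_
  have hcosh : Real.cosh (2*a*y/(2*σ^2)) ≤ Real.cosh (2*b*y/(2*σ^2)) := by
    rw [Real.cosh_le_cosh]
    have : |2*a*y/(2*σ^2)| = |a| * (2*|y|/(2*σ^2)) := by
      rw [abs_div, abs_mul, abs_mul, abs_two, abs_of_pos hc]; ring
    rw [this]
    have : |2*b*y/(2*σ^2)| = |b| * (2*|y|/(2*σ^2)) := by
      rw [abs_div, abs_mul, abs_mul, abs_two, abs_of_pos hc]; ring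
    rw [this]
    exact mul_le_mul_of_nonneg_right hab (by positivity)
  have he : (0:ℝ) ≤ Real.exp (-y^2/(2*σ^2)) := (Real.exp_pos _).le
  exact mul_le_mul_of_nonneg_right
    (mul_le_mul_of_nonneg_left hcosh he) (hh_nonneg y)
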